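/- For a globally optimal multilayer partition C (with no disconnected components in communities) and any layer s, the partitions induced by C on layers s and s+1 are equal if and only if the persistence between layers s and s+1 equals N, i.e., Pers(C)|_s = Σ_{i=1}^N δ(c_{i_s}, c_{i_{s+1}}) = N. Moreover, the 'if' direction holds for any multilayer partition, optimal or not. -/

import Mathlib

open Finset

/-- Kronecker delta on community labels, as a real number. -/
noncomputable def kdelta (a b : ℕ) : ℝ := if a = b then 1 else 0

/-- Persistence between layers `s` and `s+1`: the number of nodes whose community
assignment is unchanged from layer `s` to layer `s+1`. -/
def persAt (N : ℕ) (c : ℕ → Fin N → ℕ) (s : ℕ) : ℕ :=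
  (Finset.univ.filter fun i : Fin N => c s i = c (s + 1) i).card

/-- Total persistence of a multilayer partition: `Pers(C) = Σ_{s=1}^{|T|-1} Σ_i δ(c_{i_s}, c_{i_{s+1}})`. -/
def pers (N T : ℕ) (c : ℕ → Fin N → ℕ) : ℕ :=
  ∑ s ∈ Finset.range (T - 1), persAt N c s

/-- Multilayer modularity quality function
`Q(C) = Σ_s Σ_{i,j} B_{ijs} δ(c_{i_s}, c_{j_s}) + 2 ω Pers(C)`. -/
noncomputable def Q (N T : ℕ) (B : ℕ → Fin N → Fin N → ℝ) (ω : ℝ) (c : ℕ → Fin N → ℕ) : ℝ :=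
  (∑ s ∈ Finset.range T, ∑ i : Fin N, ∑ j : Fin N, B s i j * kdelta (c s i) (c s j))
    + 2 * ω * (pers N T c : ℝ)

/-- A multilayer partition (given by its community-assignment function) is globally
optimal for inter-layer coupling `ω` if it maximizes the multilayer quality function. -/
def IsOptimal (N T : ℕ) (B : ℕ → Fin N → Fin N → ℝ) (ω : ℝ) (c : ℕ → Fin N → ℕ) : Prop :=
  ∀ c' : ℕ → Fin N → ℕ, Q N T B ω c' ≤ Q N T B ω c

/-- Adjacency (nonzero weight) in the multilayer modularity matrix: intra-layer entries
`B_{ijs}` and ordinal diagonal uniform inter-layer coupling `ω` between consecutive layers. -/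
def Adj (N T : ℕ) (B : ℕ → Fin N → Fin N → ℝ) (ω : ℝ) (p q : ℕ × Fin N) : Prop :=
  (p.1 = q.1 ∧ p.1 < T ∧ B p.1 p.2 q.2 ≠ 0) ∨
  (p.2 = q.2 ∧ ω ≠ 0 ∧ ((p.1 + 1 = q.1 ∧ q.1 < T) ∨ (q.1 + 1 = p.1 ∧ p.1 < T)))

/-- No community of the multilayer partition contains a component that is disconnected in
the weighted graph whose adjacency matrix is the multilayer modularity matrix: any two
node-layer pairs in the same community are joined by a path staying inside that community. -/
def NoDisconnectedCommunities (N T : ℕ) (B : ℕ → Fin N → Fin N → ℝ) (ω : ℝ)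
    (c : ℕ → Fin N → ℕ) : Prop :=
  ∀ p q : ℕ × Fin N, p.1 < T → q.1 < T → c p.1 p.2 = c q.1 q.2 →
    Relation.ReflTransGen
      (fun a b => Adj N T B ω a b ∧ c a.1 a.2 = c p.1 p.2 ∧ c b.1 b.2 = c p.1 p.2) p q

lemma persAt_eq_iff_all (N : ℕ) (c : ℕ → Fin N → ℕ) (s : ℕ) :
    persAt N c s = N ↔ ∀ i : Fin N, c s i = c (s + 1) i := by
  unfold persAt
  constructor
  · intro h i
    have huniv : (Finset.univ.filter fun i : Fin N => c s i = c (s + 1) i) = Finset.univ :=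
      Finset.eq_univ_of_card _ (by simpa using h)
    have : i ∈ Finset.univ.filter fun i : Fin N => c s i = c (s + 1) i := by
      rw [huniv]; exact Finset.mem_univ i
    exact (Finset.mem_filter.mp this).2
  · intro h
    rw [Finset.filter_true_of_mem (fun i _ => h i), Finset.card_univ, Fintype.card_fin]

/-- **Proposition 3.** For a globally optimal multilayer partition `c` (with no
disconnected components in communities) with coupling `ω > 0`, the partitions induced on
layers `s` and `s+1` are equal if and only if the persistence between layers `s` and `s+1`
equals `N`. Moreover, the "if" direction holds for any multilayer partition. -/
theorem induced_partitions_eq_iff_full_persistence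
    (N T : ℕ)
    (B : ℕ → Fin N → Fin N → ℝ) (ω : ℝ) (hω : 0 < ω)
    (c : ℕ → Fin N → ℕ)
    (hopt : IsOptimal N T B ω c)
    (hconn : NoDisconnectedCommunities N T B ω c)
    (s : ℕ) (hs : s + 1 < T) :
    ((∀ i j : Fin N, (c s i = c s j ↔ c (s + 1) i = c (s + 1) j)) ↔ persAt N c s = N)
    ∧ (∀ c' : ℕ → Fin N → ℕ, persAt N c' s = N →
        ∀ i j : Fin N, (c' s i = c' s j ↔ c' (s + 1) i = c' (s + 1) j)) := by
  have hfull : ∀ c' : ℕ → Fin N → ℕ, persAt N c' s = N →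
      ∀ i j : Fin N, (c' s i = c' s j ↔ c' (s + 1) i = c' (s + 1) j) := by
    intro c' h i j
    have h' := (persAt_eq_iff_all N c' s).mp h
    rw [h' i, h' j]
  refine ⟨⟨?_, hfull c⟩, hfull⟩
  intro hpart
  by_contra hne
  have hle : persAt N c s ≤ N := by
    simpa [persAt] using Finset.card_filter_le (Finset.univ : Finset (Fin N))
      (fun i => c s i = c (s + 1) i)
  have hlt : persAt N c s < N := lt_of_le_of_ne hle hne
  -- label bound
  set M : ℕ := (Finset.univ.sup (c s)) + 1 with hM
  have hBlt : ∀ i : Fin N, c s i < M := fun i =>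
    Nat.lt_succ_of_le (Finset.le_sup (Finset.mem_univ i))
  -- relabeling injection
  set σ : ℕ → ℕ := fun x =>
    if h : ∃ i : Fin N, c (s + 1) i = x then c s h.choose else M + x with hσ
  have hσc : ∀ i : Fin N, σ (c (s + 1) i) = c s i := by
    intro i
    have hex : ∃ j : Fin N, c (s + 1) j = c (s + 1) i := ⟨i, rfl⟩
    simp only [hσ, dif_pos hex]
    exact (hpart hex.choose i).mpr hex.choose_spec
  have hσlt : ∀ x, (∃ i : Fin N, c (s + 1) i = x) → σ x < M := by
    intro x hx
    simp only [hσ, dif_pos hx]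
    exact hBlt _
  have hσinj : Function.Injective σ := by
    intro x y hxy
    by_cases hx : ∃ i : Fin N, c (s + 1) i = x <;>
      by_cases hy : ∃ i : Fin N, c (s + 1) i = y
    · obtain ⟨i, hi⟩ := hx
      obtain ⟨j, hj⟩ := hy
      rw [← hi, ← hj] at hxy ⊢
      rw [hσc i, hσc j] at hxy
      exact (hpart i j).mp hxy
    · exfalso
      have h1 : σ x < M := hσlt x hx
      have h2 : σ y = M + y := by simp only [hσ, dif_neg hy]
      omega
    · exfalso
      have h1 : σ y < M := hσlt y hy
      have h2 : σ x = M + x := by simp only [hσ, dif_neg hx]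
      omega
    · have h1 : σ x = M + x := by simp only [hσ, dif_neg hx]
      have h2 : σ y = M + y := by simp only [hσ, dif_neg hy]
      omega
  -- the improved partition
  set c' : ℕ → Fin N → ℕ := fun t i => if s + 1 ≤ t then σ (c t i) else c t i with hc'
  have hintra : ∀ t : ℕ, ∀ i j : Fin N,
      kdelta (c' t i) (c' t j) = kdelta (c t i) (c t j) := by
    intro t i j
    by_cases ht : s + 1 ≤ t
    · simp only [hc', if_pos ht, kdelta]
      by_cases hij : c t i = c t j
      · rw [if_pos hij, if_pos (congrArg σ hij)]
      · rw [if_neg hij, if_neg (fun h => hij (hσinj h))]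
    · simp only [hc', if_neg ht]
  have hpersAt : ∀ t, t ≠ s → persAt N c' t = persAt N c t := by
    intro t ht
    unfold persAt
    congr 1
    apply Finset.filter_congr
    intro i _
    by_cases h1 : s + 1 ≤ t
    · have h2 : s + 1 ≤ t + 1 := le_trans h1 (Nat.le_succ t)
      simp only [hc', if_pos h1, if_pos h2]
      exact ⟨fun h => hσinj h, fun h => congrArg σ h⟩
    · have h2 : ¬ s + 1 ≤ t + 1 := by omega
      simp only [hc', if_neg h1, if_neg h2]
  have hpersS : persAt N c' s = N := by
    unfold persAt
    rw [Finset.filter_true_of_mem, Finset.card_univ, Fintype.card_fin]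
    intro i _
    show c' s i = c' (s + 1) i
    simp only [hc', if_neg (by omega : ¬ s + 1 ≤ s), if_pos (le_refl (s + 1))]
    exact (hσc i).symm
  have hsmem : s ∈ Finset.range (T - 1) := Finset.mem_range.mpr (by omega)
  have e1 : pers N T c' = N + ∑ t ∈ (Finset.range (T - 1)).erase s, persAt N c' t := by
    unfold pers
    rw [← Finset.add_sum_erase _ _ hsmem, hpersS]
  have e2 : pers N T c = persAt N c s + ∑ t ∈ (Finset.range (T - 1)).erase s, persAt N c t := by
    unfold pers
    rw [← Finset.add_sum_erase _ _ hsmem]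
  have e3 : ∑ t ∈ (Finset.range (T - 1)).erase s, persAt N c' t
      = ∑ t ∈ (Finset.range (T - 1)).erase s, persAt N c t :=
    Finset.sum_congr rfl fun t ht => hpersAt t (Finset.ne_of_mem_erase ht)
  have hQ : Q N T B ω c' = Q N T B ω c + 2 * ω * ((N : ℝ) - persAt N c s) := by
    unfold Q
    have hint : (∑ t ∈ Finset.range T, ∑ i : Fin N, ∑ j : Fin N,
        B t i j * kdelta (c' t i) (c' t j))
        = ∑ t ∈ Finset.range T, ∑ i : Fin N, ∑ j : Fin N,
        B t i j * kdelta (c t i) (c t j) :=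
      Finset.sum_congr rfl fun t _ => Finset.sum_congr rfl fun i _ =>
        Finset.sum_congr rfl fun j _ => by rw [hintra t i j]
    rw [hint, e1, e3, e2]
    push_cast
    ring
  have hcon := hopt c'
  rw [hQ] at hcon
  have hpos : 0 < 2 * ω * ((N : ℝ) - persAt N c s) := by
    apply mul_pos (by linarith)
    have : (persAt N c s : ℝ) < N := by exact_mod_cast hlt
    linarith
  linarith
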